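/- For the standard representation of SU(n) on ℂ^n (n ≥ 2), every (n−1)-dimensional subspace W of ℂ^n has trivial pointwise stabilizer in SU(n), while for every k < n−1 there exists a k-dimensional subspace whose pointwise stabilizer in SU(n) is infinite. Hence the fixing dimension of the standard representation of SU(n) equals n−1. -/

import Mathlib

open Matrix Complex Module

private lemma su_part2 (n k : ℕ) (hn : 2 ≤ n) (hk : k < n - 1) :
    ∃ W : Submodule ℂ (Fin n → ℂ), Module.finrank ℂ W = k ∧
      {g : Matrix.specialUnitaryGroup (Fin n) ℂ |
        ∀ w ∈ W, Matrix.mulVec (g : Matrix (Fin n) (Fin n) ℂ) w = w}.Infinite := by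
  have hk2 : k ≤ n - 2 := by omega
  set emb : Fin k → Fin n := fun i => ⟨i.1, by omega⟩ with hemb
  have hembinj : Function.Injective emb := by
    intro a b hab
    simpa [hemb, Fin.ext_iff] using hab
  set v : Fin k → (Fin n → ℂ) := fun i => Pi.single (emb i) 1 with hv
  have hli : LinearIndependent ℂ v := by
    have := (Pi.basisFun ℂ (Fin n)).linearIndependent.comp emb hembinj
    convert this using 1
    funext i
    simp [hv, Pi.basisFun_apply]
  refine ⟨Submodule.span ℂ (Set.range v), ?_, ?_⟩
  · rw [finrank_span_eq_card hli]
    simp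
  · -- the infinite family of diagonal matrices
    set j₁ : Fin n := ⟨n - 1, by omega⟩ with hj₁
    set j₂ : Fin n := ⟨n - 2, by omega⟩ with hj₂
    have hj12 : j₁ ≠ j₂ := by simp [hj₁, hj₂, Fin.ext_iff]; omega
    set c : Fin n → ℝ := fun i => (if i = j₁ then (1:ℝ) else 0) - (if i = j₂ then 1 else 0)
      with hc
    have hcsum : ∑ i, c i = 0 := by
      simp [hc, Finset.sum_sub_distrib]
    set d : ℝ → Fin n → ℂ := fun θ i => Complex.exp ((c i * θ : ℝ) * Complex.I) with hd
    have hmem : ∀ θ : ℝ, Matrix.diagonal (d θ) ∈ Matrix.specialUnitaryGroup (Fin n) ℂ := by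
      intro θ
      rw [Matrix.mem_specialUnitaryGroup_iff]
      constructor
      · rw [Matrix.mem_unitaryGroup_iff']
        rw [Matrix.star_eq_conjTranspose, Matrix.diagonal_conjTranspose,
          Matrix.diagonal_mul_diagonal]
        ext i j
        by_cases h : i = j
        · subst h
          simp only [Matrix.diagonal_apply_eq, Pi.mul_apply, Pi.star_apply, hd,
            Complex.star_def, ← Complex.exp_conj, ← Complex.exp_add, Matrix.one_apply_eq]
          simp
        · simp [Matrix.diagonal_apply_ne _ h, Matrix.one_apply_ne h]
      · rw [Matrix.det_diagonal]
        simp only [hd]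
        rw [← Complex.exp_sum]
        rw [← Complex.exp_zero]
        congr 1
        push_cast
        rw [← Finset.sum_mul, ← Finset.sum_mul]
        norm_cast
        rw [hcsum]
        simp
    set f : ℝ → Matrix.specialUnitaryGroup (Fin n) ℂ := fun θ => ⟨Matrix.diagonal (d θ), hmem θ⟩
      with hf
    have hstab : ∀ θ : ℝ, f θ ∈ {g : Matrix.specialUnitaryGroup (Fin n) ℂ |
        ∀ w ∈ Submodule.span ℂ (Set.range v),
          Matrix.mulVec (g : Matrix (Fin n) (Fin n) ℂ) w = w} := by
      intro θ w hw
      induction hw using Submodule.span_induction with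
      | mem x hx =>
        obtain ⟨i, rfl⟩ := hx
        funext x
        rw [Matrix.mulVec_diagonal]
        by_cases hx : x = emb i
        · subst hx
          have hce : c (emb i) = 0 := by
            have h1 : emb i ≠ j₁ := by
              simp [hemb, hj₁, Fin.ext_iff]; omega
            have h2 : emb i ≠ j₂ := by
              simp [hemb, hj₂, Fin.ext_iff]; omega
            simp [hc, h1, h2]
          simp [hv, hd, hce]
        · simp [hv, Pi.single_eq_of_ne hx]
      | zero => simp
      | add x y _ _ hx hy => rw [Matrix.mulVec_add, hx, hy]
      | smul a x _ hx => rw [Matrix.mulVec_smul, hx]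
    have hinj : Set.InjOn f (Set.Ioo (0:ℝ) 1) := by
      intro θ₁ h₁ θ₂ h₂ hfe
      have : d θ₁ j₁ = d θ₂ j₁ := by
        have := congrArg Subtype.val hfe
        have := congrFun (congrFun this j₁) j₁
        simpa [hf, Matrix.diagonal_apply_eq] using this
      simp only [hd] at this
      have hcj : c j₁ = 1 := by simp [hc, hj12]
      rw [hcj] at this
      simp only [one_mul] at this
      obtain ⟨m, hm⟩ := Complex.exp_eq_exp_iff_exists_int.mp this
      have hI : (θ₁ : ℂ) = θ₂ + m * (2 * Real.pi) := by
        have h2 : (θ₁ : ℂ) * Complex.I = (θ₂ + m * (2 * Real.pi)) * Complex.I := by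
          rw [hm]; ring
        exact mul_right_cancel₀ Complex.I_ne_zero h2
      have hR : θ₁ = θ₂ + m * (2 * Real.pi) := by
        exact_mod_cast hI
      obtain ⟨hθ₁0, hθ₁1⟩ := h₁
      obtain ⟨hθ₂0, hθ₂1⟩ := h₂
      have hpi := Real.pi_gt_three
      rcases lt_trichotomy m 0 with hm0 | hm0 | hm0
      · have : (m : ℝ) ≤ -1 := by exact_mod_cast Int.le_sub_one_of_lt hm0
        nlinarith
      · subst hm0; simp at hR; linarith
      · have : (1:ℝ) ≤ (m : ℝ) := by exact_mod_cast hm0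
        nlinarith
    have hIoo : (Set.Ioo (0:ℝ) 1).Infinite := Set.Ioo_infinite one_pos
    exact ((hIoo.image hinj).mono (by rintro x ⟨θ, hθ, rfl⟩; exact hstab θ))


private lemma su_part1 (n : ℕ) (hn : 2 ≤ n) (W : Submodule ℂ (Fin n → ℂ))
    (hW : Module.finrank ℂ W = n - 1) (g : Matrix.specialUnitaryGroup (Fin n) ℂ)
    (hg : ∀ w ∈ W, Matrix.mulVec (g : Matrix (Fin n) (Fin n) ℂ) w = w) : g = 1 := by
  obtain ⟨m, rfl⟩ : ∃ m, n = m + 1 := ⟨n - 1, by omega⟩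
  have hm : 1 ≤ m := by omega
  set A : Matrix (Fin (m+1)) (Fin (m+1)) ℂ := (g : Matrix (Fin (m+1)) (Fin (m+1)) ℂ) with hA
  obtain ⟨hAu, hAdet⟩ := Matrix.mem_specialUnitaryGroup_iff.mp g.2
  have hstar : Aᴴ * A = 1 := by
    have := Matrix.mem_unitaryGroup_iff'.mp hAu
    rwa [Matrix.star_eq_conjTranspose] at this
  set L : EuclideanSpace ℂ (Fin (m+1)) ≃ₗ[ℂ] (Fin (m+1) → ℂ) :=
    WithLp.linearEquiv 2 ℂ (Fin (m+1) → ℂ) with hL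
  set WE : Submodule ℂ (EuclideanSpace ℂ (Fin (m+1))) := W.map L.symm.toLinearMap with hWE
  have hWEfin : Module.finrank ℂ WE = m := by
    rw [hWE, LinearEquiv.finrank_map_eq, hW]
    omega
  have hperp : Module.finrank ℂ WEᗮ = 1 := by
    have h1 := Submodule.finrank_add_finrank_orthogonal WE
    rw [hWEfin, finrank_euclideanSpace_fin] at h1
    omega
  -- choose a nonzero vector in the orthogonal complement
  obtain ⟨v₀, hv₀mem, hv₀ne⟩ : ∃ v₀ ∈ WEᗮ, v₀ ≠ 0 := by
    obtain ⟨x, hx⟩ := Module.finrank_pos_iff_exists_ne_zero.mp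
      (show 0 < Module.finrank ℂ WEᗮ by rw [hperp]; norm_num)
    exact ⟨x.1, x.2, by simpa using hx⟩
  have hspan : (ℂ ∙ v₀) = WEᗮ := by
    apply Submodule.eq_of_le_of_finrank_le
    · rw [Submodule.span_le, Set.singleton_subset_iff]; exact hv₀mem
    · rw [hperp, finrank_span_singleton hv₀ne]
  -- the conjugated linear map
  set fE : EuclideanSpace ℂ (Fin (m+1)) →ₗ[ℂ] EuclideanSpace ℂ (Fin (m+1)) :=
    L.symm.toLinearMap ∘ₗ Matrix.toLin' A ∘ₗ L.toLinearMap with hfE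
  have hfEapply : ∀ x, fE x = L.symm (A *ᵥ (L x)) := by
    intro x; simp [hfE, Matrix.toLin'_apply]
  have hdetfE : LinearMap.det fE = 1 := by
    have h := LinearMap.det_conj (Matrix.toLin' A) L.symm
    simp only [LinearEquiv.symm_symm] at h
    rw [hfE, h, LinearMap.det_toLin', hAdet]
  have hfix : ∀ x ∈ WE, fE x = x := by
    rintro x ⟨w, hw, rfl⟩
    rw [hfEapply]
    simp [hg w hw]
  -- fE preserves the orthogonal complement
  have hpres : fE v₀ ∈ WEᗮ := by
    rw [Submodule.mem_orthogonal]
    intro u hu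
    have hu' : (L u) ∈ W := by
      rw [hWE] at hu
      obtain ⟨w, hw, rfl⟩ := hu
      simpa using hw
    have hfixu : A *ᵥ (L u) = L u := hg _ hu'
    have hadj : Aᴴ *ᵥ (L u) = L u := by
      conv_lhs => rw [← hfixu]
      rw [Matrix.mulVec_mulVec, hstar, Matrix.one_mulVec]
    have hinner : (inner ℂ u (fE v₀) : ℂ) = inner ℂ u v₀ := by
      rw [hfEapply, EuclideanSpace.inner_eq_star_dotProduct,
        EuclideanSpace.inner_eq_star_dotProduct]
      have he : (L.symm (A *ᵥ L v₀)).ofLp = A *ᵥ L v₀ := by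
        simp [hL, WithLp.linearEquiv_symm_apply]
      have hLu : u.ofLp = L u := by
        simp [hL, WithLp.linearEquiv_apply]
      have hLv : v₀.ofLp = L v₀ := by
        simp [hL, WithLp.linearEquiv_apply]
      have h2 : star (L u) ᵥ* A = star (L u) := by
        conv_rhs => rw [← hadj, Matrix.star_mulVec, Matrix.conjTranspose_conjTranspose]
      rw [he, hLu, hLv, dotProduct_comm, dotProduct_mulVec, h2, dotProduct_comm]
    rw [hinner]
    exact (Submodule.mem_orthogonal _ _).mp hv₀mem u hu
  -- hence fE v₀ = lam • v₀
  obtain ⟨lam, hlam⟩ : ∃ lam : ℂ, fE v₀ = lam • v₀ := by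
    rw [← hspan] at hpres
    obtain ⟨c, hc⟩ := Submodule.mem_span_singleton.mp hpres
    exact ⟨c, hc.symm⟩
  -- build a basis adapted to WE and v₀
  have hWEfd : FiniteDimensional ℂ WE := inferInstance
  set bW : Basis (Fin m) ℂ WE := Module.finBasisOfFinrankEq ℂ WE hWEfin with hbW
  set cfam : Fin (m+1) → EuclideanSpace ℂ (Fin (m+1)) :=
    Fin.cons v₀ (fun i => (bW i : EuclideanSpace ℂ (Fin (m+1)))) with hcfam
  have hliW : LinearIndependent ℂ (fun i => (bW i : EuclideanSpace ℂ (Fin (m+1)))) :=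
    bW.linearIndependent.map' WE.subtype (Submodule.ker_subtype WE)
  have hspanW : Submodule.span ℂ (Set.range fun i => (bW i : EuclideanSpace ℂ (Fin (m+1)))) = WE := by
    have : Set.range (fun i => (bW i : EuclideanSpace ℂ (Fin (m+1)))) =
        WE.subtype '' Set.range bW := by
      rw [← Set.range_comp]; rfl
    rw [this, Submodule.span_image, bW.span_eq, Submodule.map_subtype_top]
  have hv₀notin : v₀ ∉ WE := by
    intro hmem
    have := (Submodule.mem_orthogonal _ _).mp hv₀mem v₀ hmem
    exact hv₀ne (inner_self_eq_zero.mp this)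
  have hlic : LinearIndependent ℂ cfam := by
    rw [hcfam, linearIndependent_fin_cons]
    exact ⟨hliW, by rw [hspanW]; exact hv₀notin⟩
  have hspanc : ⊤ ≤ Submodule.span ℂ (Set.range cfam) := by
    rw [hcfam]
    have hr : Set.range (Fin.cons v₀ (fun i => (bW i : EuclideanSpace ℂ (Fin (m+1)))))
        = insert v₀ (Set.range fun i => (bW i : EuclideanSpace ℂ (Fin (m+1)))) := by
      exact Fin.range_cons _ _
    rw [hr, Submodule.span_insert, hspanW, hspan, sup_comm,
      Submodule.sup_orthogonal_of_hasOrthogonalProjection]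
  set b : Basis (Fin (m+1)) ℂ (EuclideanSpace ℂ (Fin (m+1))) := Basis.mk hlic hspanc with hb
  have hbapply : ∀ i, b i = cfam i := fun i => by rw [hb, Basis.coe_mk]
  -- fE acts diagonally on b
  set dvec : Fin (m+1) → ℂ := Fin.cons lam (fun _ => 1) with hdvec
  have hdiag : ∀ j, fE (b j) = dvec j • b j := by
    intro j
    refine Fin.cases ?_ ?_ j
    · rw [hbapply, hcfam, hdvec]
      simp only [Fin.cons_zero]
      exact hlam
    · intro i
      rw [hbapply, hcfam, hdvec]
      simp only [Fin.cons_succ, one_smul]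
      exact hfix _ (bW i).2
  have hmat : LinearMap.toMatrix b b fE = Matrix.diagonal dvec := by
    ext i j
    rw [LinearMap.toMatrix_apply, hdiag j, _root_.map_smul, Basis.repr_self, Matrix.diagonal_apply]
    rw [Finsupp.smul_apply, Finsupp.single_apply]
    by_cases h : i = j
    · subst h; simp
    · simp [h, Ne.symm h]
  have hlam1 : lam = 1 := by
    have h1 : LinearMap.det fE = Matrix.det (LinearMap.toMatrix b b fE) :=
      (LinearMap.det_toMatrix b fE).symm
    rw [hmat, Matrix.det_diagonal, hdvec] at h1
    rw [Fin.prod_cons] at h1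
    simp at h1
    rw [hdetfE] at h1
    exact h1.symm
  -- conclude fE = id
  have hd1 : ∀ j, dvec j = 1 := by
    intro j
    refine Fin.cases ?_ ?_ j <;> simp [hdvec, hlam1]
  have hall : ∀ x, fE x = x := by
    intro x
    have hx : x ∈ Submodule.span ℂ (Set.range cfam) := hspanc Submodule.mem_top
    induction hx using Submodule.span_induction with
    | mem y hy =>
      obtain ⟨j, rfl⟩ := hy
      rw [← hbapply, hdiag, hd1, one_smul]
    | zero => simp
    | add y z _ _ hy hz => rw [map_add, hy, hz]
    | smul a y _ hy => rw [_root_.map_smul, hy]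
  have hAone : A = 1 := by
    have htl : Matrix.toLin' A = LinearMap.id := by
      apply LinearMap.ext
      intro v
      have := hall (L.symm v)
      rw [hfEapply] at this
      have := congrArg L this
      simpa [Matrix.toLin'_apply] using this
    have : Matrix.toLin' A = Matrix.toLin' 1 := by rw [htl, Matrix.toLin'_one]
    exact Matrix.toLin'.injective this
  exact Subtype.ext hAone

/-- The fixing dimension of the standard representation of `SU(n)` on `ℂⁿ` (`n ≥ 2`)
is `n − 1`: every `(n−1)`-dimensional subspace has trivial pointwise stabilizer,
while for every `k < n − 1` some `k`-dimensional subspace has infinite pointwise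
stabilizer. -/
theorem fixing_dimension_specialUnitaryGroup (n : ℕ) (hn : 2 ≤ n) :
    (∀ W : Submodule ℂ (Fin n → ℂ), Module.finrank ℂ W = n - 1 →
      ∀ g : Matrix.specialUnitaryGroup (Fin n) ℂ,
        (∀ w ∈ W, Matrix.mulVec (g : Matrix (Fin n) (Fin n) ℂ) w = w) → g = 1) ∧
    (∀ k < n - 1, ∃ W : Submodule ℂ (Fin n → ℂ), Module.finrank ℂ W = k ∧
      {g : Matrix.specialUnitaryGroup (Fin n) ℂ |
        ∀ w ∈ W, Matrix.mulVec (g : Matrix (Fin n) (Fin n) ℂ) w = w}.Infinite) :=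
  ⟨fun W hW g hg => su_part1 n hn W hW g hg, fun k hk => su_part2 n k hn hk⟩
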